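/- arXiv:2104.04413 — 4 statements merged into one kernel-verified Lean document; each statement's English description precedes it below -/
import Mathlib

section
/- Let N be a DDNN with layers (W⁽ᵃ'ⁱ⁾, W⁽ᵛ'ⁱ⁾, σ⁽ⁱ⁾), i = 1,…,n, fix a layer index j and an input v ∈ ℝ^{s₀}. Then the DDNN output on v, regarded as a function of the j-th value-channel weight matrix (with all other weight matrices and all activation functions held fixed), is affine: there exist a linear map L from the space of s_j × s_{j−1} real matrices to ℝ^{s_n} and a vector c ∈ ℝ^{s_n} such that, for every s_j × s_{j−1} real matrix M, the output of the DDNN on input v when W⁽ᵛ'ʲ⁾ is replaced by M equals c + L(M). -/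
open Matrix

/-- Linearization of `f` around `v₀`. -/
noncomputable def Linearize {E F : Type*} [NormedAddCommGroup E] [NormedSpace ℝ E]
    [NormedAddCommGroup F] [NormedSpace ℝ F] (f : E → F) (v₀ : E) (x : E) : F :=
  f v₀ + fderiv ℝ f v₀ (x - v₀)

/-- The `k`-th activation-channel intermediate vector `v⁽ᵃ'ᵏ⁾` of a DDNN with
activation-channel weights `Wa` and activations `σ`. -/
def ddnnAct (s : ℕ → ℕ)
    (Wa : ∀ i : ℕ, Matrix (Fin (s (i + 1))) (Fin (s i)) ℝ)
    (σ : ∀ i : ℕ, (Fin (s (i + 1)) → ℝ) → (Fin (s (i + 1)) → ℝ)) :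
    ∀ k : ℕ, (Fin (s 0) → ℝ) → (Fin (s k) → ℝ)
  | 0, v => v
  | k + 1, v => σ k ((Wa k).mulVec (ddnnAct s Wa σ k v))

/-- The `k`-th value-channel intermediate vector `v⁽ᵛ'ᵏ⁾` of a DDNN;
`ddnnVal s Wa Wv σ n` is the function computed by the DDNN. -/
noncomputable def ddnnVal (s : ℕ → ℕ)
    (Wa Wv : ∀ i : ℕ, Matrix (Fin (s (i + 1))) (Fin (s i)) ℝ)
    (σ : ∀ i : ℕ, (Fin (s (i + 1)) → ℝ) → (Fin (s (i + 1)) → ℝ)) :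
    ∀ k : ℕ, (Fin (s 0) → ℝ) → (Fin (s k) → ℝ)
  | 0, v => v
  | k + 1, v =>
      Linearize (σ k) ((Wa k).mulVec (ddnnAct s Wa σ k v))
        ((Wv k).mulVec (ddnnVal s Wa Wv σ k v))

/-- `M ↦ M.mulVec w` as a linear map in the matrix `M`. -/
def mulVecRightLM {p m : ℕ} (w : Fin m → ℝ) :
    Matrix (Fin p) (Fin m) ℝ →ₗ[ℝ] (Fin p → ℝ) where
  toFun M := M.mulVec w
  map_add' A B := Matrix.add_mulVec A B w
  map_smul' r A := Matrix.smul_mulVec r A w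

/-- Layers below `j` don't see the update of the `j`-th value matrix. -/
lemma ddnnVal_update_of_le (s : ℕ → ℕ)
    (Wa Wv : ∀ i : ℕ, Matrix (Fin (s (i + 1))) (Fin (s i)) ℝ)
    (σ : ∀ i : ℕ, (Fin (s (i + 1)) → ℝ) → (Fin (s (i + 1)) → ℝ))
    (j : ℕ) (M : Matrix (Fin (s (j + 1))) (Fin (s j)) ℝ) (v : Fin (s 0) → ℝ) :
    ∀ k, k ≤ j → ddnnVal s Wa (Function.update Wv j M) σ k v = ddnnVal s Wa Wv σ k v := by
  intro k
  induction k with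
  | zero => intro _; rfl
  | succ k ih =>
    intro hk
    have h1 : k ≤ j := Nat.le_of_succ_le hk
    have h2 : k ≠ j := by omega
    simp only [ddnnVal, ih h1, Function.update_of_ne h2]

/-- For a fixed input `v`, the output of a DDNN is an affine
function of the `j`-th value-channel weight matrix: there are a linear map `L`
and a constant `c` such that replacing `W⁽ᵛ'ʲ⁾` by any matrix `M` yields output
`c + L M`. -/
theorem ddnn_output_affine_in_value_layer (n : ℕ) (s : ℕ → ℕ)
    (Wa Wv : ∀ i : ℕ, Matrix (Fin (s (i + 1))) (Fin (s i)) ℝ)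
    (σ : ∀ i : ℕ, (Fin (s (i + 1)) → ℝ) → (Fin (s (i + 1)) → ℝ))
    (hσ : ∀ i, Differentiable ℝ (σ i))
    (j : ℕ) (hj : j < n) (v : Fin (s 0) → ℝ) :
    ∃ (L : Matrix (Fin (s (j + 1))) (Fin (s j)) ℝ →ₗ[ℝ] (Fin (s n) → ℝ))
      (c : Fin (s n) → ℝ),
      ∀ M : Matrix (Fin (s (j + 1))) (Fin (s j)) ℝ,
        ddnnVal s Wa (Function.update Wv j M) σ n v = c + L M := by
  have key : ∀ k, j < k → ∃ (L : Matrix (Fin (s (j + 1))) (Fin (s j)) ℝ →ₗ[ℝ] (Fin (s k) → ℝ))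
      (c : Fin (s k) → ℝ),
      ∀ M, ddnnVal s Wa (Function.update Wv j M) σ k v = c + L M := by
    intro k
    induction k with
    | zero => omega
    | succ k ih =>
      intro hk
      set a := (Wa k).mulVec (ddnnAct s Wa σ k v) with ha
      set D := fderiv ℝ (σ k) a with hD
      rcases Nat.lt_succ_iff_lt_or_eq.mp hk with hk' | hk'
      · obtain ⟨L, c, hLc⟩ := ih hk'
        refine ⟨D.toLinearMap ∘ₗ (Matrix.mulVecLin (Wv k)) ∘ₗ L,
                σ k a + D ((Wv k).mulVec c - a), ?_⟩
        intro M
        have hne : Function.update Wv j M k = Wv k :=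
          Function.update_of_ne (by omega) _ _
        simp only [ddnnVal, hLc M, hne, Linearize, ← ha, ← hD]
        have : (Wv k).mulVec (c + L M) - a
            = ((Wv k).mulVec c - a) + (Wv k).mulVec (L M) := by
          rw [Matrix.mulVec_add]; abel
        rw [this, map_add]
        simp only [LinearMap.coe_comp, Function.comp_apply,
          ContinuousLinearMap.coe_coe, Matrix.mulVecLin_apply]
        abel
      · subst hk'
        set w := ddnnVal s Wa Wv σ j v with hw
        refine ⟨D.toLinearMap ∘ₗ mulVecRightLM w, σ j a - D a, ?_⟩
        intro M
        have hupd := ddnnVal_update_of_le s Wa Wv σ j M v j le_rfl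
        simp only [ddnnVal, hupd, Function.update_self, Linearize, ← ha, ← hD, ← hw]
        have : M.mulVec w - a = M.mulVec w + (-a) := by abel
        rw [this, map_add, map_neg]
        simp only [LinearMap.coe_comp, Function.comp_apply,
          ContinuousLinearMap.coe_coe, mulVecRightLM, LinearMap.coe_mk, AddHom.coe_mk]
        abel
  exact key n hj
end

section
/- Let N be a DDNN with layers (W⁽ᵃ'ⁱ⁾, W⁽ᵛ'ⁱ⁾, σ⁽ⁱ⁾), fix a layer index j and an input x ∈ ℝ^{s₀}. For an s_j × s_{j−1} real matrix Δ, let N_Δ(x) denote the output of the DDNN on input x when W⁽ᵛ'ʲ⁾ is replaced by W⁽ᵛ'ʲ⁾ + Δ. Then the map Δ ↦ N_Δ(x) is Fréchet differentiable at Δ = 0, and its first-order expansion at 0 is exact: N_Δ(x) = N₀(x) + J(Δ) for every Δ, where J is the Fréchet derivative of Δ ↦ N_Δ(x) at 0. -/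
open Matrix

attribute [local instance] Matrix.normedAddCommGroup Matrix.normedSpace

/-- For a fixed input `x`, the map `Δ ↦ N_Δ(x)`, where `N_Δ` is
the DDNN with `W⁽ᵛ'ʲ⁾` replaced by `W⁽ᵛ'ʲ⁾ + Δ`, is Fréchet differentiable at
`Δ = 0` and its first-order expansion at `0` is exact. -/
theorem ddnn_value_layer_expansion_exact (n : ℕ) (s : ℕ → ℕ)
    (Wa Wv : ∀ i : ℕ, Matrix (Fin (s (i + 1))) (Fin (s i)) ℝ)
    (σ : ∀ i : ℕ, (Fin (s (i + 1)) → ℝ) → (Fin (s (i + 1)) → ℝ))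
    (hσ : ∀ i, Differentiable ℝ (σ i))
    (j : ℕ) (hj : j < n) (x : Fin (s 0) → ℝ)
    (F : Matrix (Fin (s (j + 1))) (Fin (s j)) ℝ → (Fin (s n) → ℝ))
    (hF : ∀ Δ, F Δ = ddnnVal s Wa (Function.update Wv j (Wv j + Δ)) σ n x) :
    DifferentiableAt ℝ F 0 ∧ ∀ Δ, F Δ = F 0 + fderiv ℝ F 0 Δ := by
  classical
  -- For k ≤ j, the value channel does not depend on Δ.
  have hlow : ∀ k, k ≤ j → ∀ Δ,
      ddnnVal s Wa (Function.update Wv j (Wv j + Δ)) σ k x = ddnnVal s Wa Wv σ k x := by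
    intro k
    induction k with
    | zero => intro _ Δ; rfl
    | succ k ih =>
        intro hk Δ
        have hk' : k ≠ j := by omega
        simp only [ddnnVal, Function.update_of_ne hk', ih (by omega) Δ]
  -- linear map Δ ↦ Δ.mulVec v
  have mulByL : ∀ (p m : ℕ) (v : Fin m → ℝ),
      ∃ L : Matrix (Fin p) (Fin m) ℝ →L[ℝ] (Fin p → ℝ), ∀ Δ, L Δ = Δ.mulVec v := by
    intro p m v
    refine ⟨LinearMap.toContinuousLinearMap
      { toFun := fun Δ => Δ.mulVec v
        map_add' := fun A B => Matrix.add_mulVec A B v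
        map_smul' := fun r A => by
          simp [Matrix.smul_mulVec] }, fun Δ => rfl⟩
  -- Affine structure for all k > j.
  have key : ∀ k, j < k → ∃ (c : Fin (s k) → ℝ)
      (L : Matrix (Fin (s (j + 1))) (Fin (s j)) ℝ →L[ℝ] (Fin (s k) → ℝ)),
      ∀ Δ, ddnnVal s Wa (Function.update Wv j (Wv j + Δ)) σ k x = c + L Δ := by
    intro k
    induction k with
    | zero => omega
    | succ k ih =>
        intro hk
        set a := (Wa k).mulVec (ddnnAct s Wa σ k x) with ha
        set D := fderiv ℝ (σ k) a with hD
        rcases Nat.lt_or_ge j k with hjk | hjk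
        · -- k > j : use IH
          obtain ⟨c, L, hcl⟩ := ih hjk
          have hk' : k ≠ j := by omega
          obtain ⟨M, hM⟩ := mulByL (s (k+1)) (s k) (0 : Fin (s k) → ℝ)
          refine ⟨σ k a + D ((Wv k).mulVec c - a),
            D.comp (((Matrix.mulVecLin (Wv k)).toContinuousLinearMap).comp L), fun Δ => ?_⟩
          simp only [ddnnVal, Function.update_of_ne hk', hcl Δ, Linearize]
          have : (Wv k).mulVec (c + L Δ) = (Wv k).mulVec c + (Wv k).mulVec (L Δ) :=
            Matrix.mulVec_add _ _ _
          rw [this]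
          have h2 : (Wv k).mulVec c + (Wv k).mulVec (L Δ) - a
              = ((Wv k).mulVec c - a) + (Wv k).mulVec (L Δ) := by abel
          rw [h2, map_add]
          simp only [ContinuousLinearMap.comp_apply, LinearMap.coe_toContinuousLinearMap',
            Matrix.mulVecLin_apply]
          abel
        · -- k = j
          have hkj : k = j := by omega
          subst hkj
          set c₀ := ddnnVal s Wa Wv σ k x with hc₀
          obtain ⟨M, hM⟩ := mulByL (s (k+1)) (s k) c₀
          refine ⟨σ k a + D ((Wv k).mulVec c₀ - a), D.comp M, fun Δ => ?_⟩
          simp only [ddnnVal, Function.update_self, hlow k le_rfl Δ, Linearize, ← hc₀]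
          have : (Wv k + Δ).mulVec c₀ = (Wv k).mulVec c₀ + Δ.mulVec c₀ :=
            Matrix.add_mulVec _ _ _
          rw [this]
          have h2 : (Wv k).mulVec c₀ + Δ.mulVec c₀ - a
              = ((Wv k).mulVec c₀ - a) + Δ.mulVec c₀ := by abel
          rw [h2, map_add]
          simp only [ContinuousLinearMap.comp_apply, hM]
          abel
  obtain ⟨c, L, hcl⟩ := key n hj
  have hFa : ∀ Δ, F Δ = c + L Δ := fun Δ => (hF Δ).trans (hcl Δ)
  have hFe : F = fun Δ => c + L Δ := funext hFa
  have hder : HasFDerivAt F L 0 := by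
    rw [hFe]; exact (L.hasFDerivAt).const_add c
  refine ⟨hder.differentiableAt, fun Δ => ?_⟩
  rw [hder.fderiv, hFa Δ, hFa 0, map_zero, add_zero]
end

section
/- Let N be a DDNN, fix a layer index j, and let (X, A^·, b^·) be a pointwise repair specification with X finite. For an s_j × s_{j−1} real matrix Δ, let N_Δ denote the DDNN with W⁽ᵛ'ʲ⁾ replaced by W⁽ᵛ'ʲ⁾ + Δ, and let S = {Δ | N_Δ satisfies the specification}. If S is nonempty, then there exists Δ* ∈ S whose ℓ∞ norm (the maximum absolute value of its entries) is minimal: ‖Δ*‖∞ ≤ ‖Δ‖∞ for every Δ ∈ S. In other words, a minimal single-layer repair exists whenever any single-layer repair of the given layer exists. -/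
open Matrix


lemma pinorm {ι : Type*} [Fintype ι] (f : ι → ℝ) : ‖f‖ = ⨆ i, |f i| := by
  cases isEmpty_or_nonempty ι
  · simp [Pi.norm_def, Real.iSup_of_isEmpty]
  · rw [Pi.norm_def, Finset.sup_univ_eq_ciSup, NNReal.coe_iSup]
    simp [Real.norm_eq_abs]

lemma cont_mulVec {α : Type*} [TopologicalSpace α] {m p : ℕ}
    {M : α → Matrix (Fin m) (Fin p) ℝ} {v : α → Fin p → ℝ}
    (hM : Continuous M) (hv : Continuous v) :
    Continuous (fun a => (M a).mulVec (v a)) := by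
  apply continuous_pi
  intro i
  simp only [Matrix.mulVec, dotProduct]
  apply continuous_finset_sum
  intro l _
  exact ((continuous_apply l).comp ((continuous_apply i).comp hM)).mul
    ((continuous_apply l).comp hv)

/-- Let `S` be the set of single-layer changes `Δ` to the `j`-th
value-channel weight matrix of a DDNN for which the changed DDNN satisfies the
pointwise repair specification `(X, A, b)`. If `S` is nonempty, then it contains
an element `Δ*` of minimal ℓ∞ norm (maximum absolute value of the entries):
a minimal single-layer repair exists whenever any single-layer repair exists. -/
theorem minimal_pointwise_repair_exists (n : ℕ) (s : ℕ → ℕ)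
    (Wa Wv : ∀ i : ℕ, Matrix (Fin (s (i + 1))) (Fin (s i)) ℝ)
    (σ : ∀ i : ℕ, (Fin (s (i + 1)) → ℝ) → (Fin (s (i + 1)) → ℝ))
    (hσ : ∀ i, Differentiable ℝ (σ i))
    (j : ℕ) (hj : j < n)
    (X : Finset (Fin (s 0) → ℝ))
    (k : (Fin (s 0) → ℝ) → ℕ)
    (A : ∀ x : Fin (s 0) → ℝ, Matrix (Fin (k x)) (Fin (s n)) ℝ)
    (b : ∀ x : Fin (s 0) → ℝ, Fin (k x) → ℝ)
    (N : Matrix (Fin (s (j + 1))) (Fin (s j)) ℝ → (Fin (s 0) → ℝ) → (Fin (s n) → ℝ))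
    (hN : ∀ Δ x, N Δ x = ddnnVal s Wa (Function.update Wv j (Wv j + Δ)) σ n x)
    (S : Set (Matrix (Fin (s (j + 1))) (Fin (s j)) ℝ))
    (hS : S = {Δ | ∀ x ∈ X, ∀ r, (A x).mulVec (N Δ x) r ≤ b x r})
    (linf : Matrix (Fin (s (j + 1))) (Fin (s j)) ℝ → ℝ)
    (hlinf : ∀ Δ, linf Δ = ⨆ p : Fin (s (j + 1)) × Fin (s j), |Δ p.1 p.2|)
    (hne : S.Nonempty) :
    ∃ Δstar ∈ S, ∀ Δ ∈ S, linf Δstar ≤ linf Δ := by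
  -- continuity of the repaired network in Δ
  have hW : ∀ m : ℕ, Continuous (fun Δ : Matrix (Fin (s (j + 1))) (Fin (s j)) ℝ =>
      Function.update Wv j (Wv j + Δ) m) := by
    intro m
    rcases eq_or_ne m j with rfl | hmj
    · simp only [Function.update_self]
      exact continuous_const.add continuous_id
    · simp only [Function.update_of_ne hmj]
      exact continuous_const
  have hcont : ∀ (m : ℕ) (x : Fin (s 0) → ℝ),
      Continuous (fun Δ : Matrix (Fin (s (j + 1))) (Fin (s j)) ℝ =>
        ddnnVal s Wa (Function.update Wv j (Wv j + Δ)) σ m x) := by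
    intro m x
    induction m with
    | zero => simp only [ddnnVal]; exact continuous_const
    | succ m ih =>
      simp only [ddnnVal, Linearize]
      set a := (Wa m).mulVec (ddnnAct s Wa σ m x) with ha
      have hy : Continuous (fun Δ : Matrix (Fin (s (j + 1))) (Fin (s j)) ℝ =>
          (Function.update Wv j (Wv j + Δ) m).mulVec
            (ddnnVal s Wa (Function.update Wv j (Wv j + Δ)) σ m x)) :=
        cont_mulVec (hW m) ih
      exact continuous_const.add
        ((fderiv ℝ (σ m) a).continuous.comp (hy.sub continuous_const))
  have hNc : ∀ x, Continuous (fun Δ => N Δ x) := by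
    intro x
    simp only [hN]
    exact hcont n x
  -- S is closed
  have hScl : IsClosed S := by
    rw [hS]
    have : {Δ | ∀ x ∈ X, ∀ r, (A x).mulVec (N Δ x) r ≤ b x r} =
        ⋂ x ∈ X, ⋂ r, {Δ | (A x).mulVec (N Δ x) r ≤ b x r} := by
      ext Δ; simp
    rw [this]
    refine isClosed_biInter fun x _ => isClosed_iInter fun r => ?_
    exact isClosed_le ((continuous_apply r).comp (cont_mulVec continuous_const (hNc x)))
      continuous_const
  -- transfer to a Pi space via a homeomorphism
  let e : Matrix (Fin (s (j + 1))) (Fin (s j)) ℝ ≃ₜ (Fin (s (j + 1)) × Fin (s j) → ℝ) :=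
    { toFun := fun Δ p => Δ p.1 p.2
      invFun := fun f i l => f (i, l)
      left_inv := fun Δ => rfl
      right_inv := fun f => rfl
      continuous_toFun := continuous_pi fun p =>
        (continuous_apply p.2).comp (continuous_apply p.1)
      continuous_invFun := continuous_pi fun i => continuous_pi fun l =>
        continuous_apply (i, l) }
  have hlinf' : ∀ Δ, linf Δ = ‖e Δ‖ := by
    intro Δ
    rw [hlinf, pinorm]
    rfl
  obtain ⟨Δ₀, h₀⟩ := hne
  set K := (e '' S) ∩ Metric.closedBall 0 ‖e Δ₀‖ with hK
  have hKcomp : IsCompact K :=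
    (isCompact_closedBall 0 ‖e Δ₀‖).inter_left (e.isClosedEmbedding.isClosedMap S hScl)
  have hKne : K.Nonempty :=
    ⟨e Δ₀, ⟨Δ₀, h₀, rfl⟩, by simp [mem_closedBall_zero_iff]⟩
  obtain ⟨y, hyK, hymin⟩ := hKcomp.exists_isMinOn hKne continuous_norm.continuousOn
  obtain ⟨⟨Δ₁, hΔ₁S, rfl⟩, hyball⟩ := hyK
  refine ⟨Δ₁, hΔ₁S, fun Δ hΔ => ?_⟩
  rw [hlinf', hlinf']
  rcases le_or_gt ‖e Δ‖ ‖e Δ₀‖ with h | h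
  · exact hymin ⟨⟨Δ, hΔ, rfl⟩, by simpa [mem_closedBall_zero_iff] using h⟩
  · exact le_trans (by simpa [mem_closedBall_zero_iff] using hyball) h.le
end

section
/- Let N' : ℝ^n → ℝ^m and let P ⊆ ℝ^n satisfy P = R₁ ∪ ⋯ ∪ R_k, where each R_t is the convex hull of a finite set V_t ⊆ ℝ^n and N' agrees with some affine map g_t on R_t (i.e., N'(x) = g_t(x) for all x ∈ R_t). Then, for any real p × m matrix A and any b ∈ ℝ^p: A N'(x) ≤ b componentwise for every x ∈ P if and only if A N'(v) ≤ b componentwise for every t ∈ {1,…,k} and every v ∈ V_t. In other words, a polytope repair specification over P is satisfied if and only if the corresponding pointwise repair specification over the vertices of the linear regions is satisfied. -/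
open Matrix

/-- Suppose `P = R₁ ∪ ⋯ ∪ R_k`, where each `R_t` is the convex
hull of a finite set `V_t` and `N'` agrees with an affine map `g_t` on `R_t`.
Then `A N'(x) ≤ b` componentwise for every `x ∈ P` iff `A N'(v) ≤ b`
componentwise for every `t` and every `v ∈ V_t`: the polytope repair
specification holds iff the corresponding pointwise repair specification over
the vertices of the linear regions holds. -/
theorem polytope_spec_iff_vertex_spec (n m p k : ℕ)
    (N' : (Fin n → ℝ) → (Fin m → ℝ))
    (P : Set (Fin n → ℝ))
    (V : Fin k → Set (Fin n → ℝ)) (hVfin : ∀ t, (V t).Finite)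
    (hP : P = ⋃ t, convexHull ℝ (V t))
    (g : Fin k → (Fin n → ℝ) → (Fin m → ℝ))
    (hg : ∀ t, ∃ (M : Matrix (Fin m) (Fin n) ℝ) (c : Fin m → ℝ),
      ∀ x, g t x = M.mulVec x + c)
    (hagree : ∀ t, ∀ x ∈ convexHull ℝ (V t), N' x = g t x)
    (A : Matrix (Fin p) (Fin m) ℝ) (b : Fin p → ℝ) :
    (∀ x ∈ P, ∀ i, A.mulVec (N' x) i ≤ b i) ↔
      (∀ t, ∀ v ∈ V t, ∀ i, A.mulVec (N' v) i ≤ b i) := by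
  constructor
  · intro h t v hv i
    exact h v (by rw [hP]; exact Set.mem_iUnion.2 ⟨t, subset_convexHull ℝ _ hv⟩) i
  · intro h x hx i
    rw [hP] at hx
    obtain ⟨t, hxt⟩ := Set.mem_iUnion.1 hx
    obtain ⟨M, c, hMc⟩ := hg t
    rw [hagree t x hxt, hMc]
    have hconv : Convex ℝ {y : Fin n → ℝ | ∀ i, A.mulVec (M.mulVec y + c) i ≤ b i} := by
      intro y hy z hz a b' ha hb' hab
      intro i
      have hy' := hy i
      have hz' := hz i
      have : M.mulVec (a • y + b' • z) + c
          = a • (M.mulVec y + c) + b' • (M.mulVec z + c) := by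
        rw [Matrix.mulVec_add, Matrix.mulVec_smul, Matrix.mulVec_smul]
        funext j
        simp only [Pi.add_apply, Pi.smul_apply, smul_eq_mul]
        linear_combination (-(c j)) * hab
      rw [this, Matrix.mulVec_add, Matrix.mulVec_smul, Matrix.mulVec_smul]
      simp only [Pi.add_apply, Pi.smul_apply, smul_eq_mul]
      have hb : a * b i + b' * b i = b i := by linear_combination b i * hab
      linarith [mul_le_mul_of_nonneg_left hy' ha, mul_le_mul_of_nonneg_left hz' hb']
    have hsub : convexHull ℝ (V t) ⊆ {y | ∀ i, A.mulVec (M.mulVec y + c) i ≤ b i} := by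
      apply convexHull_min _ hconv
      intro v hv i
      have := h t v hv i
      rwa [hagree t v (subset_convexHull ℝ _ hv), hMc] at this
    exact hsub hxt i
end
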